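/- Let A be a ring and let T be a class of right A-modules that is closed under isomorphisms, submodules, quotient modules, extensions, and arbitrary direct products. Set I := ⋂ {K : K is a right ideal of A with A/K ∈ T}. Then I is a two-sided ideal of A, I·I = I, and T = {M : M is a right A-module with MI = 0}. -/

import Mathlib

open MulOpposite DirectSum

private def toCyc (A : Type) [Ring A] (M : Type) [AddCommGroup M] [Module Aᵐᵒᵖ M] (m : M) :
    A →ₗ[Aᵐᵒᵖ] M where
  toFun a := op a • m
  map_add' a b := by show op (a + b) • m = op a • m + op b • m; rw [op_add, add_smul]
  map_smul' r a := by
    show op (a * r.unop) • m = r • (op a • m)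
    rw [op_mul, op_unop, mul_smul]

private noncomputable def inc (R : Type) [Ring R] (ι : Type) (F : ι → Type)
    [∀ i, AddCommGroup (F i)] [∀ i, Module R (F i)] : (⨁ i, F i) →ₗ[R] (∀ i, F i) where
  toFun x := fun i => x i
  map_add' x y := by funext i; exact DirectSum.add_apply x y i
  map_smul' r x := by funext i; exact DirectSum.smul_apply r x i

private theorem inc_injective (R : Type) [Ring R] (ι : Type) (F : ι → Type)
    [∀ i, AddCommGroup (F i)] [∀ i, Module R (F i)] : Function.Injective (inc R ι F) :=
  fun x y h => DFunLike.coe_injective (by funext i; exact congrFun h i)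

private theorem toCyc_apply (A : Type) [Ring A] (M : Type) [AddCommGroup M] [Module Aᵐᵒᵖ M]
    (m : M) (a : A) : toCyc A M m a = op a • m := rfl

/-- If `T` is a class of right `A`-modules (modules over `Aᵐᵒᵖ`) closed under
isomorphisms, submodules, quotients, extensions and arbitrary direct products, and
`I := ⋂ {K right ideal | A/K ∈ T}`, then `I` is a two-sided ideal, `I` is idempotent
(every element of `I` is a finite sum of products of two elements of `I`), and
`T = {M | MI = 0}`.  Right ideals of `A` are submodules of the right regular module,
i.e. `Submodule Aᵐᵒᵖ A`. -/
theorem stmt_1 (A : Type) [Ring A]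
    (T : ∀ (M : Type) [AddCommGroup M] [Module Aᵐᵒᵖ M], Prop)
    (hiso : ∀ (M N : Type) [AddCommGroup M] [Module Aᵐᵒᵖ M] [AddCommGroup N] [Module Aᵐᵒᵖ N],
      (M ≃ₗ[Aᵐᵒᵖ] N) → T M → T N)
    (hsub : ∀ (M : Type) [AddCommGroup M] [Module Aᵐᵒᵖ M],
      T M → ∀ N : Submodule Aᵐᵒᵖ M, T N)
    (hquot : ∀ (M : Type) [AddCommGroup M] [Module Aᵐᵒᵖ M],
      T M → ∀ N : Submodule Aᵐᵒᵖ M, T (M ⧸ N))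
    (hext : ∀ (M₁ M M₂ : Type) [AddCommGroup M₁] [Module Aᵐᵒᵖ M₁] [AddCommGroup M]
        [Module Aᵐᵒᵖ M] [AddCommGroup M₂] [Module Aᵐᵒᵖ M₂]
        (f : M₁ →ₗ[Aᵐᵒᵖ] M) (g : M →ₗ[Aᵐᵒᵖ] M₂),
      Function.Injective f → Function.Surjective g → LinearMap.range f = LinearMap.ker g →
      T M₁ → T M₂ → T M)
    (hprod : ∀ (ι : Type) (M : ι → Type) [∀ i, AddCommGroup (M i)] [∀ i, Module Aᵐᵒᵖ (M i)],
      (∀ i, T (M i)) → T (∀ i, M i)) :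
    -- `I` is already a right ideal; it is moreover closed under left multiplication,
    (∀ a ∈ sInf {K : Submodule Aᵐᵒᵖ A | T (A ⧸ K)}, ∀ b : A,
      b * a ∈ sInf {K : Submodule Aᵐᵒᵖ A | T (A ⧸ K)}) ∧
    -- `I` is idempotent,
    (∀ a ∈ sInf {K : Submodule Aᵐᵒᵖ A | T (A ⧸ K)},
      a ∈ AddSubgroup.closure {x : A | ∃ b ∈ sInf {K : Submodule Aᵐᵒᵖ A | T (A ⧸ K)},
        ∃ c ∈ sInf {K : Submodule Aᵐᵒᵖ A | T (A ⧸ K)}, x = b * c}) ∧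
    -- and `T` is exactly the class of right `A`-modules annihilated by `I`.
    (∀ (M : Type) [AddCommGroup M] [Module Aᵐᵒᵖ M],
      T M ↔ ∀ (m : M), ∀ a ∈ sInf {K : Submodule Aᵐᵒᵖ A | T (A ⧸ K)}, op a • m = 0) := by
  set S : Set (Submodule Aᵐᵒᵖ A) := {K : Submodule Aᵐᵒᵖ A | T (A ⧸ K)} with hS
  set I : Submodule Aᵐᵒᵖ A := sInf S with hI
  -- `A ⧸ I` belongs to `T`.
  have lemA : T (A ⧸ I) := by
    set f : A →ₗ[Aᵐᵒᵖ] (∀ K : S, A ⧸ (K : Submodule Aᵐᵒᵖ A)) :=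
      LinearMap.pi (fun K => (K : Submodule Aᵐᵒᵖ A).mkQ) with hf
    have hker : LinearMap.ker f = I := by
      ext a
      simp only [LinearMap.mem_ker, hf, LinearMap.pi_apply, funext_iff, Pi.zero_apply,
        Submodule.mkQ_apply, Submodule.Quotient.mk_eq_zero, hI, Submodule.mem_sInf]
      exact ⟨fun h K hK => h ⟨K, hK⟩, fun h K => h K K.2⟩
    have hP : T (∀ K : S, A ⧸ (K : Submodule Aᵐᵒᵖ A)) := hprod _ _ (fun K => K.2)
    have h1 : T (LinearMap.range f) := hsub _ hP _
    exact hiso _ _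
      ((f.quotKerEquivRange).symm.trans (Submodule.quotEquivOfEq _ _ hker)) h1
  -- every module in `T` is annihilated by `I`
  have lemB : ∀ (M : Type) [AddCommGroup M] [Module Aᵐᵒᵖ M],
      T M → ∀ (m : M), ∀ a ∈ I, op a • m = 0 := by
    intro M _ _ hTM m a ha
    have hkS : T (A ⧸ LinearMap.ker (toCyc A M m)) :=
      hiso _ _ (toCyc A M m).quotKerEquivRange.symm (hsub M hTM _)
    have hle : I ≤ LinearMap.ker (toCyc A M m) := sInf_le hkS
    simpa [toCyc_apply] using (LinearMap.mem_ker.mp (hle ha))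
  -- every module annihilated by `I` is in `T`
  have lemC : ∀ (M : Type) [AddCommGroup M] [Module Aᵐᵒᵖ M],
      (∀ (m : M), ∀ a ∈ I, op a • m = 0) → T M := by
    intro M _ _ hann
    haveI : DecidableEq M := Classical.decEq M
    have hcyc : ∀ m : M, T (LinearMap.range (toCyc A M m)) := by
      intro m
      have hle : I ≤ LinearMap.ker (toCyc A M m) := by
        intro a ha
        exact LinearMap.mem_ker.mpr (hann m a ha)
      have h1 : T ((A ⧸ I) ⧸ (LinearMap.ker (toCyc A M m)).map I.mkQ) := hquot _ lemA _
      exact hiso _ _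
        ((Submodule.quotientQuotientEquivQuotient I _ hle).trans
          (toCyc A M m).quotKerEquivRange) h1
    have hP : T (∀ m : M, LinearMap.range (toCyc A M m)) := hprod _ _ hcyc
    have hTD : T (⨁ m : M, ↥(LinearMap.range (toCyc A M m))) := by
      have h1 := hsub _ hP (LinearMap.range (inc Aᵐᵒᵖ M (fun m => ↥(LinearMap.range (toCyc A M m)))))
      exact hiso _ _ (LinearEquiv.ofInjective _ (inc_injective Aᵐᵒᵖ M _)).symm h1
    set s : (⨁ m : M, ↥(LinearMap.range (toCyc A M m))) →ₗ[Aᵐᵒᵖ] M :=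
      DirectSum.toModule Aᵐᵒᵖ M M (fun m => (LinearMap.range (toCyc A M m)).subtype) with hs
    have hssurj : Function.Surjective s := by
      intro m
      refine ⟨DirectSum.lof Aᵐᵒᵖ M (fun m => ↥(LinearMap.range (toCyc A M m))) m
        ⟨m, ⟨1, by simp [toCyc_apply]⟩⟩, ?_⟩
      rw [hs, DirectSum.toModule_lof]
      rfl
    exact hiso _ _ (s.quotKerEquivOfSurjective hssurj) (hquot _ hTD _)
  refine ⟨?_, ?_, ?_⟩
  · -- two-sidedness
    intro a ha b
    have := lemB (A ⧸ I) lemA (Submodule.Quotient.mk b) a ha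
    rw [← Submodule.Quotient.mk_smul, op_smul_eq_mul] at this
    exact (Submodule.Quotient.mk_eq_zero I).mp this
  · -- idempotency
    intro a ha
    set gen : Set A := {x : A | ∃ b ∈ I, ∃ c ∈ I, x = b * c} with hgen
    set J : Submodule Aᵐᵒᵖ A :=
      { carrier := (AddSubgroup.closure gen : Set A)
        add_mem' := fun hx hy => AddSubgroup.add_mem _ hx hy
        zero_mem' := AddSubgroup.zero_mem _
        smul_mem' := by
          intro r x hx
          have key : AddSubgroup.closure gen ≤
              (AddSubgroup.closure gen).comap (AddMonoidHom.mulRight r.unop) := by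
            rw [AddSubgroup.closure_le]
            rintro y ⟨b, hb, c, hc, rfl⟩
            show b * c * r.unop ∈ AddSubgroup.closure gen
            rw [mul_assoc]
            exact AddSubgroup.subset_closure ⟨b, hb, c * r.unop,
              I.smul_mem (op r.unop) hc, rfl⟩
          exact key hx } with hJ
    have hJI : J ≤ I := by
      intro x hx
      refine AddSubgroup.closure_induction (fun y hy => ?_) I.zero_mem
        (fun y z _ _ h1 h2 => I.add_mem h1 h2) (fun y _ h => I.neg_mem h) hx
      obtain ⟨b, hb, c, hc, rfl⟩ := hy
      exact I.smul_mem (op c) hb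
    -- the module `I ⧸ J` is annihilated by `I`, hence in `T`
    set J₀ : Submodule Aᵐᵒᵖ ↥I := J.comap I.subtype with hJ₀
    have hTM₁ : T (↥I ⧸ J₀) := by
      refine lemC _ ?_
      intro m x hx
      obtain ⟨y, rfl⟩ := Submodule.Quotient.mk_surjective J₀ m
      rw [← Submodule.Quotient.mk_smul, Submodule.Quotient.mk_eq_zero]
      show (op x • y : ↥I) ∈ J₀
      show ((op x • y : ↥I) : A) ∈ J
      exact AddSubgroup.subset_closure ⟨(y : A), y.2, x, hx, rfl⟩
    -- extension `0 → I/J → A/J → A/I → 0`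
    set f : (↥I ⧸ J₀) →ₗ[Aᵐᵒᵖ] (A ⧸ J) := Submodule.mapQ J₀ J I.subtype le_rfl with hfd
    set g : (A ⧸ J) →ₗ[Aᵐᵒᵖ] (A ⧸ I) := Submodule.mapQ J I LinearMap.id hJI with hgd
    have hfinj : Function.Injective f := by
      intro y z hyz
      obtain ⟨y, rfl⟩ := Submodule.Quotient.mk_surjective J₀ y
      obtain ⟨z, rfl⟩ := Submodule.Quotient.mk_surjective J₀ z
      rw [hfd, Submodule.mapQ_apply, Submodule.mapQ_apply,
        Submodule.Quotient.eq] at hyz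
      rw [Submodule.Quotient.eq]
      exact hyz
    have hgsurj : Function.Surjective g := by
      intro y
      obtain ⟨b, rfl⟩ := Submodule.Quotient.mk_surjective I y
      exact ⟨Submodule.Quotient.mk b, by rw [hgd, Submodule.mapQ_apply]; rfl⟩
    have hrg : LinearMap.range f = LinearMap.ker g := by
      ext y
      constructor
      · rintro ⟨z, rfl⟩
        obtain ⟨z, rfl⟩ := Submodule.Quotient.mk_surjective J₀ z
        rw [LinearMap.mem_ker, hfd, Submodule.mapQ_apply, hgd, Submodule.mapQ_apply,
          Submodule.Quotient.mk_eq_zero]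
        exact z.2
      · intro hy
        obtain ⟨b, rfl⟩ := Submodule.Quotient.mk_surjective J y
        rw [LinearMap.mem_ker, hgd, Submodule.mapQ_apply,
          Submodule.Quotient.mk_eq_zero] at hy
        exact ⟨Submodule.Quotient.mk (⟨b, hy⟩ : ↥I), by rw [hfd, Submodule.mapQ_apply]; rfl⟩
    have hTAJ : T (A ⧸ J) := hext _ _ _ f g hfinj hgsurj hrg hTM₁ lemA
    have : I ≤ J := sInf_le hTAJ
    exact this ha
  · intro M _ _
    exact ⟨lemB M, lemC M⟩
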